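/- Let $T : U \oplus W \to V$ be a linear isomorphism, $\dim U = m$, $\dim W = k$, $\dim V = m+k = n$, and fix a basis $v_1,\ldots,v_n$ of $V$. Then there exists a subset $E \subseteq \{1,\ldots,n\}$ with $|E| = m$ such that $\pi_E \circ T|_U : U \to V_E$ and $\pi_{\overline{E}} \circ T|_W : W \to V_{\overline{E}}$ are both isomorphisms. -/

import Mathlib

open Module in
/-- Given a linear isomorphism `T : U × W ≃ V` with `dim U = m`, `dim W = k`,
`dim V = m + k = n`, and a basis `v` of `V` indexed by `Fin n`, there is a subset
`E ⊆ {1,…,n}` with `|E| = m` such that the composition of `T|_U` with the coordinate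
projection `π_E` onto the span of `{v j : j ∈ E}` is an isomorphism, and likewise
`π_{Eᶜ} ∘ T|_W` is an isomorphism. (The projections are expressed in coordinates:
`u ↦ (v.repr (T (u,0)) j)_{j ∈ E}`.) -/
theorem stmt1 {K : Type*} [Field K]
    {U W V : Type*} [AddCommGroup U] [Module K U] [AddCommGroup W] [Module K W]
    [AddCommGroup V] [Module K V]
    {m k n : ℕ} (hU : Module.finrank K U = m) (hW : Module.finrank K W = k)
    (hn : m + k = n)
    (T : (U × W) ≃ₗ[K] V) (v : Basis (Fin n) K V) :
    ∃ E : Finset (Fin n), E.card = m ∧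
      Function.Bijective (fun (u : U) => fun j : E => v.repr (T (u, 0)) j) ∧
      Function.Bijective (fun (w : W) => fun j : (Eᶜ : Finset (Fin n)) => v.repr (T (0, w)) j) := by
  classical
  haveI : FiniteDimensional K V := Module.Finite.of_basis v
  set TU : U →ₗ[K] V := T.toLinearMap ∘ₗ LinearMap.inl K U W with hTU
  set TW : W →ₗ[K] V := T.toLinearMap ∘ₗ LinearMap.inr K U W with hTW
  have hTUinj : Function.Injective TU := by
    intro a b h
    have := T.injective (a₁ := (a,0)) (a₂ := (b,0)) h
    exact (Prod.mk.injEq _ _ _ _).mp this |>.1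
  have hTWinj : Function.Injective TW := by
    intro a b h
    have := T.injective (a₁ := (0,a)) (a₂ := (0,b)) h
    exact (Prod.mk.injEq _ _ _ _).mp this |>.2
  haveI : FiniteDimensional K U := FiniteDimensional.of_injective TU hTUinj
  haveI : FiniteDimensional K W := FiniteDimensional.of_injective TW hTWinj
  set P : V →ₗ[K] V := TU ∘ₗ LinearMap.fst K U W ∘ₗ T.symm.toLinearMap with hP
  have hPU : ∀ u : U, P (TU u) = TU u := by intro u; simp [hP, hTU]
  have hPW : ∀ w : W, P (TW w) = 0 := by intro w; simp [hP, hTU, hTW]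
  have hPrange : ∀ x : V, P x ∈ LinearMap.range TU := fun x => ⟨_, rfl⟩
  have hPcompl : ∀ x : V, x - P x ∈ LinearMap.range TW := by
    intro x
    refine ⟨(LinearMap.snd K U W) (T.symm x), ?_⟩
    simp only [hTW, hP, hTU, LinearMap.comp_apply, LinearEquiv.coe_coe, LinearMap.inr_apply,
      LinearMap.inl_apply, LinearMap.fst_apply, LinearMap.snd_apply]
    conv_rhs => rw [← T.apply_symm_apply x]
    rw [← map_sub]
    congr 1
    ext <;> simp
  -- rows of coordinate matrices
  set A : Fin n → Fin n → K := fun i => v.equivFun (P (v i)) with hA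
  set B : Fin n → Fin n → K := fun i => v.equivFun (v i - P (v i)) with hB
  have hAB : A + B = fun i => v.equivFun (v i) := by
    funext i j
    simp [hA, hB, map_sub, Finsupp.single_apply]
  have hdet : (1 : K) = ∑ s : Finset (Fin n),
      Matrix.detRowAlternating (Matrix.of (s.piecewise A B)) := by
    have h1 : Matrix.detRowAlternating (Matrix.of (A + B)) = 1 := by
      have : Matrix.of (A + B) = (1 : Matrix (Fin n) (Fin n) K) := by
        rw [hAB]; funext i j
        simp [Matrix.one_apply, Basis.equivFun_self, Finsupp.single_apply]
      rw [this]
      exact Matrix.det_one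
    rw [← h1]
    exact ((Matrix.detRowAlternating :
      (Fin n → K) [⋀^Fin n]→ₗ[K] K).toMultilinearMap.map_add_univ A B)
  obtain ⟨s, hsdet⟩ : ∃ s : Finset (Fin n),
      Matrix.detRowAlternating (Matrix.of (s.piecewise A B)) ≠ 0 := by
    by_contra hcon
    push_neg at hcon
    rw [Finset.sum_eq_zero (fun s _ => hcon s)] at hdet
    exact one_ne_zero hdet
  have hrows : LinearIndependent K (fun i => (Matrix.of (s.piecewise A B)) i) :=
    Matrix.linearIndependent_rows_iff_isUnit.mpr
      ((Matrix.isUnit_iff_isUnit_det _).mpr (isUnit_iff_ne_zero.mpr hsdet))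
  set h : Fin n → V := fun i => if i ∈ s then P (v i) else v i - P (v i) with hh
  have hli : LinearIndependent K h := by
    refine LinearIndependent.of_comp v.equivFun.toLinearMap ?_
    have : (⇑v.equivFun.toLinearMap ∘ h) = fun i => (Matrix.of (s.piecewise A B)) i := by
      funext i
      show v.equivFun (h i) = s.piecewise A B i
      by_cases hi : i ∈ s
      · rw [Finset.piecewise_eq_of_mem _ _ _ hi]
        simp [hh, hi, hA]
      · rw [Finset.piecewise_eq_of_notMem _ _ _ hi]
        simp [hh, hi, hB]
    rw [this]; exact hrows
  -- cardinality
  have hcard1 : s.card ≤ m := by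
    have hli' : LinearIndependent K (fun i : ↥s => h i) :=
      hli.comp _ Subtype.val_injective
    have hspan : Submodule.span K (Set.range (fun i : ↥s => h i)) ≤ LinearMap.range TU := by
      rw [Submodule.span_le]
      rintro _ ⟨⟨i, hi⟩, rfl⟩
      simp only [hh, hi, if_pos]
      exact hPrange _
    calc s.card = Fintype.card ↥s := (Fintype.card_coe s).symm
      _ = finrank K (Submodule.span K (Set.range (fun i : ↥s => h i))) :=
          (finrank_span_eq_card hli').symm
      _ ≤ finrank K (LinearMap.range TU) := Submodule.finrank_mono hspan
      _ = m := by rw [LinearMap.finrank_range_of_inj hTUinj, hU]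
  have hcard2 : sᶜ.card ≤ k := by
    have hli' : LinearIndependent K (fun i : ↥(sᶜ) => h i) :=
      hli.comp _ Subtype.val_injective
    have hspan : Submodule.span K (Set.range (fun i : ↥(sᶜ) => h i)) ≤ LinearMap.range TW := by
      rw [Submodule.span_le]
      rintro _ ⟨⟨i, hi⟩, rfl⟩
      rw [Finset.mem_compl] at hi
      simp only [hh, hi, if_neg, if_false]
      exact hPcompl _
    calc sᶜ.card = Fintype.card ↥(sᶜ) := (Fintype.card_coe _).symm
      _ = finrank K (Submodule.span K (Set.range (fun i : ↥(sᶜ) => h i))) :=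
          (finrank_span_eq_card hli').symm
      _ ≤ finrank K (LinearMap.range TW) := Submodule.finrank_mono hspan
      _ = k := by rw [LinearMap.finrank_range_of_inj hTWinj, hW]
  have hcards : s.card + sᶜ.card = n := by
    rw [Finset.card_add_card_compl, Fintype.card_fin]
  have hsm : s.card = m := by omega
  have hsk : sᶜ.card = k := by omega
  refine ⟨s, hsm, ?_, ?_⟩
  · -- U side
    set φ : U →ₗ[K] (↥(s : Finset (Fin n)) → K) :=
      { toFun := fun u j => v.repr (T (u, 0)) j
        map_add' := by
          intro a b
          funext j
          show (v.repr (T ((a + b : U), (0 : W)))) (j : Fin n)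
            = (v.repr (T ((a : U), (0 : W)))) (j : Fin n) + (v.repr (T ((b : U), (0 : W)))) (j : Fin n)
          have h0 : ((a + b : U), (0 : W)) = (a, 0) + (b, 0) := by simp
          rw [h0, map_add, map_add]
          simp
        map_smul' := by
          intro c a
          funext j
          show (v.repr (T ((c • a : U), (0 : W)))) (j : Fin n)
            = c • (v.repr (T ((a : U), (0 : W)))) (j : Fin n)
          have h0 : ((c • a : U), (0 : W)) = c • ((a : U), (0 : W)) := by simp
          rw [h0, map_smul, map_smul]
          simp } with hφ
    have hinj : Function.Injective φ := by
      rw [injective_iff_map_eq_zero]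
      intro u hu
      set x := TU u with hx
      have hxs : ∀ i ∈ s, v.repr x i = 0 := by
        intro i hi
        have := congrFun hu ⟨i, hi⟩
        simpa [hφ, hx, hTU] using this
      have hsum : ∑ i, v.repr x i • h i = 0 := by
        have e1 : ∀ i ∈ Finset.univ, v.repr x i • h i = v.repr x i • (v i - P (v i)) := by
          intro i _
          by_cases hi : i ∈ s
          · rw [hxs i hi]; simp
          · simp [hh, hi]
        rw [Finset.sum_congr rfl e1]
        have e2 : ∑ i, v.repr x i • (v i - P (v i))
            = (∑ i, v.repr x i • v i) - P (∑ i, v.repr x i • v i) := by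
          rw [map_sum, ← Finset.sum_sub_distrib]
          congr 1; funext i; rw [smul_sub, map_smul]
        rw [e2, Basis.sum_repr, hx, hPU, sub_self]
      have hzero : ∀ i, v.repr x i = 0 :=
        Fintype.linearIndependent_iff.mp hli (fun i => v.repr x i) hsum
      have : x = 0 := by
        have : v.repr x = 0 := by ext i; simpa using hzero i
        simpa using congrArg v.repr.symm this
      exact hTUinj (by rw [← hx, this, map_zero])
    have hfr : finrank K U = finrank K (↥(s : Finset (Fin n)) → K) := by
      rw [hU, Module.finrank_pi, Fintype.card_coe, hsm]
    exact ⟨hinj, (LinearMap.injective_iff_surjective_of_finrank_eq_finrank hfr).mp hinj⟩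
  · -- W side
    set φ : W →ₗ[K] (↥(sᶜ : Finset (Fin n)) → K) :=
      { toFun := fun w j => v.repr (T (0, w)) j
        map_add' := by
          intro a b
          funext j
          show (v.repr (T ((0 : U), (a + b : W)))) (j : Fin n)
            = (v.repr (T ((0 : U), (a : W)))) (j : Fin n) + (v.repr (T ((0 : U), (b : W)))) (j : Fin n)
          have h0 : ((0 : U), (a + b : W)) = (0, a) + (0, b) := by simp
          rw [h0, map_add, map_add]
          simp
        map_smul' := by
          intro c a
          funext j
          show (v.repr (T ((0 : U), (c • a : W)))) (j : Fin n)
            = c • (v.repr (T ((0 : U), (a : W)))) (j : Fin n)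
          have h0 : ((0 : U), (c • a : W)) = c • ((0 : U), (a : W)) := by simp
          rw [h0, map_smul, map_smul]
          simp } with hφ
    have hinj : Function.Injective φ := by
      rw [injective_iff_map_eq_zero]
      intro w hw
      set x := TW w with hx
      have hxs : ∀ i ∈ sᶜ, v.repr x i = 0 := by
        intro i hi
        have := congrFun hw ⟨i, hi⟩
        simpa [hφ, hx, hTW] using this
      have hsum : ∑ i, v.repr x i • h i = 0 := by
        have e1 : ∀ i ∈ Finset.univ, v.repr x i • h i = v.repr x i • P (v i) := by
          intro i _
          by_cases hi : i ∈ s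
          · simp [hh, hi]
          · rw [hxs i (Finset.mem_compl.mpr hi)]; simp
        rw [Finset.sum_congr rfl e1]
        have e2 : ∑ i, v.repr x i • P (v i) = P (∑ i, v.repr x i • v i) := by
          rw [map_sum]
          congr 1; funext i; rw [map_smul]
        rw [e2, Basis.sum_repr, hx, hPW]
      have hzero : ∀ i, v.repr x i = 0 :=
        Fintype.linearIndependent_iff.mp hli (fun i => v.repr x i) hsum
      have : x = 0 := by
        have : v.repr x = 0 := by ext i; simpa using hzero i
        simpa using congrArg v.repr.symm this
      exact hTWinj (by rw [← hx, this, map_zero])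
    have hfr : finrank K W = finrank K (↥(sᶜ : Finset (Fin n)) → K) := by
      rw [hW, Module.finrank_pi, Fintype.card_coe, hsk]
    exact ⟨hinj, (LinearMap.injective_iff_surjective_of_finrank_eq_finrank hfr).mp hinj⟩
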